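/- Let A(x) be the symmetric matrix pencil A(x) = [[x₀,0,x₁,x₂],[0,x₀,x₃,x₄],[x₁,x₃,x₀,0],[x₂,x₄,0,x₀]]. Then the quartic hypersurface S = V(det A(x)) in ℙ⁴ is singular along the quadratic surface V(x₀, x₁x₄ − x₂x₃): every point of that surface lies in the vanishing locus of det A and of all its partial derivatives. -/

import Mathlib

open MvPolynomial Matrix

/-- The symmetric matrix pencil of Example "max smooth quadric", with polynomial entries. -/
noncomputable def pencilA : Matrix (Fin 4) (Fin 4) (MvPolynomial (Fin 5) ℂ) :=
  !![X 0, 0, X 1, X 2;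
     0, X 0, X 3, X 4;
     X 1, X 3, X 0, 0;
     X 2, X 4, 0, X 0]

/-- Explicit form of the determinant of the pencil. -/
lemma pencilA_det : pencilA.det = X 0^4 - X 0^2 * (X 1^2 + X 2^2 + X 3^2 + X 4^2)
    + (X 1 * X 4 - X 2 * X 3)^2 := by
  simp [pencilA, Matrix.det_succ_row_zero, Fin.sum_univ_succ, Fin.succAbove,
    Fin.castSucc, Fin.castAdd, Fin.castLE, show ((2:Fin 3):Fin 4)=2 from rfl]
  ring

/-- The quartic symmetroid `det A(x) = 0` in `ℙ⁴` is singular along the quadratic surface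
`V(x₀, x₁x₄ − x₂x₃)`: the determinant and all its partial derivatives vanish there. -/
theorem symmetroid_singular_along_quadric (x : Fin 5 → ℂ)
    (h0 : x 0 = 0) (hq : x 1 * x 4 - x 2 * x 3 = 0) :
    eval x pencilA.det = 0 ∧ ∀ i : Fin 5, eval x (pderiv i pencilA.det) = 0 := by
  rw [pencilA_det]
  refine ⟨?_, fun i => ?_⟩
  · simp [h0]
    linear_combination hq
  · fin_cases i <;> simp [pderiv_X, Pi.single_apply, h0] <;> exact Or.inl hq
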